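/- Let φ(t) be a smooth family of (0,1)-vector forms with φ(0)=0, ω_t = e^{i_{φ(t)}|i_{φ̄(t)}}(ω(t)) a smooth family of Hermitian (1,1)-forms with ω(0) = ω, and suppose ∂_t ∂̄_t ω_t = 0 for all t. Then −∂(φ'(0) ⌟ ∂ω) + ∂̄(φ̄'(0) ⌟ ∂̄ω) + ∂∂̄ω'(0) = 0; equivalently 2i·Im(∂ ∘ i_{φ'(0)} ∘ ∂)(ω) = ∂∂̄ ω'(0). -/

import Mathlib

/-!
STATEMENT 5 (main theorem): Let φ(t) be a smooth family of (0,1)-vector forms with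
φ(0) = 0, ω_t = e^{i_{φ(t)}|i_{φ̄(t)}}(ω(t)) a smooth family of Hermitian forms with
ω(0) = ω, and suppose ∂_t∂̄_t ω_t = 0 for all t.  Then
−∂(φ'(0) ⌟ ∂ω) + ∂̄(φ̄'(0) ⌟ ∂̄ω) + ∂∂̄ω'(0) = 0.

Abstract model: V is the (normed, complex) space of forms, D = ∂, Db = ∂̄ with
D² = D̄² = 0 and ∂∂̄ω₀ = 0 (SKT); E t = i_{φ(t)}, Eb t = i_{φ̄(t)} are differentiable
families of operators vanishing at t = 0 with derivatives E' = i_{φ'(0)},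
Eb' = i_{φ̄'(0)}; ω : t ↦ ω(t) has ω(0) = ω₀ and derivative ω'.  By the formulas
of Rao–Zhao, ∂_t∂̄_t ω_t = 0 reads, after applying the isomorphism e^{i_φ|i_φ̄},
C₁(t)(([∂̄, i_{φ̄(t)}] + ∂)(C₂(t)(([∂, i_{φ(t)}] + ∂̄)(C₃(t)(ω(t)))))) = 0,
where the simultaneous-contraction corrections C₁, C₂, C₃ (coming from (I−φφ̄)^{±1}⌟,
etc.) are 1 + o(t); the brackets are operator commutators.
-/

open Asymptotics

noncomputable section

private lemma corr_aux {V : Type*} [NormedAddCommGroup V] [NormedSpace ℂ V]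
    (C : ℝ → (V →L[ℂ] V))
    (h : (fun t => C t - 1) =o[nhds (0:ℝ)] fun t : ℝ => t) :
    C 0 = 1 ∧ HasDerivAt C 0 0 := by
  have h0 : C 0 = 1 := by
    have hb := (h.bound one_pos).self_of_nhds
    simp only [norm_zero, mul_zero] at hb
    have h1 : C 0 - 1 = 0 := norm_le_zero_iff.mp (by simpa using hb)
    exact sub_eq_zero.mp h1
  exact ⟨h0, by rw [hasDerivAt_iff_isLittleO]; simpa [h0] using h⟩

/-- Transfer a derivative of a family of `ℂ`-linear maps to the restricted `ℝ`-linear maps. -/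
private lemma restrict_deriv {V : Type*} [NormedAddCommGroup V] [NormedSpace ℂ V]
    {c : ℝ → (V →L[ℂ] V)} {c' : V →L[ℂ] V} (h : HasDerivAt c c' 0) :
    HasDerivAt (fun t => (c t).restrictScalars ℝ) (c'.restrictScalars ℝ) 0 := by
  have := (ContinuousLinearMap.restrictScalarsL ℂ V V ℝ ℝ).hasFDerivAt.comp_hasDerivAt 0 h
  simpa [Function.comp_def] using this

theorem statement5 (V : Type*) [NormedAddCommGroup V] [NormedSpace ℂ V]
    (D Db : V →L[ℂ] V) (hD2 : ∀ x, D (D x) = 0) (hDb2 : ∀ x, Db (Db x) = 0)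
    (E Eb : ℝ → (V →L[ℂ] V)) (E' Eb' : V →L[ℂ] V)
    (hE0 : E 0 = 0) (hEb0 : Eb 0 = 0)
    (hE : HasDerivAt E E' 0) (hEb : HasDerivAt Eb Eb' 0)
    (ω : ℝ → V) (ω₀ ω' : V) (hω0 : ω 0 = ω₀) (hω : HasDerivAt ω ω' 0)
    (hSKT : D (Db ω₀) = 0) (hSKT' : Db (D ω₀) = 0)
    (C₁ C₂ C₃ : ℝ → (V →L[ℂ] V))
    (hC₁ : (fun t => C₁ t - 1) =o[nhds (0 : ℝ)] fun t : ℝ => t)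
    (hC₂ : (fun t => C₂ t - 1) =o[nhds (0 : ℝ)] fun t : ℝ => t)
    (hC₃ : (fun t => C₃ t - 1) =o[nhds (0 : ℝ)] fun t : ℝ => t)
    -- the family ω_t is SKT for every t: ∂_t ∂̄_t ω_t = 0
    (hSKTfam : ∀ t : ℝ,
      C₁ t ((Db ∘L Eb t - Eb t ∘L Db + D)
        (C₂ t ((D ∘L E t - E t ∘L D + Db) (C₃ t (ω t))))) = 0) :
    -(D (E' (D ω₀))) + Db (Eb' (Db ω₀)) + D (Db ω') = 0 := by
  obtain ⟨hC₁0, hC₁d⟩ := corr_aux C₁ hC₁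
  obtain ⟨hC₂0, hC₂d⟩ := corr_aux C₂ hC₂
  obtain ⟨hC₃0, hC₃d⟩ := corr_aux C₃ hC₃
  have hRE := restrict_deriv hE
  have hREb := restrict_deriv hEb
  have hRC₁ := restrict_deriv hC₁d
  have hRC₂ := restrict_deriv hC₂d
  have hRC₃ := restrict_deriv hC₃d
  have hDconst : ∀ v : V, HasFDerivAt (fun x : V => D x) (D.restrictScalars ℝ) v :=
    fun v => (D.restrictScalars ℝ).hasFDerivAt
  -- v(t) = C₃ t (ω t)
  have hv : HasDerivAt (fun t => C₃ t (ω t)) ω' 0 := by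
    simpa [hω0, hC₃0] using hRC₃.clm_apply hω
  -- pieces of w(t) = D (E t (v t)) - E t (D (v t)) + Db (v t)
  have hEv : HasDerivAt (fun t => E t (C₃ t (ω t))) (E' ω₀) 0 := by
    simpa [hω0, hC₃0, hE0] using hRE.clm_apply hv
  have hDEv : HasDerivAt (fun t => D (E t (C₃ t (ω t)))) (D (E' ω₀)) 0 := by
    simpa [Function.comp_def] using (D.restrictScalars ℝ).hasFDerivAt.comp_hasDerivAt 0 hEv
  have hDv : HasDerivAt (fun t => D (C₃ t (ω t))) (D ω') 0 := by
    simpa [Function.comp_def] using (D.restrictScalars ℝ).hasFDerivAt.comp_hasDerivAt 0 hv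
  have hEDv : HasDerivAt (fun t => E t (D (C₃ t (ω t)))) (E' (D ω₀)) 0 := by
    simpa [hω0, hC₃0, hE0] using hRE.clm_apply hDv
  have hDbv : HasDerivAt (fun t => Db (C₃ t (ω t))) (Db ω') 0 := by
    simpa [Function.comp_def] using (Db.restrictScalars ℝ).hasFDerivAt.comp_hasDerivAt 0 hv
  -- w(t) = (D ∘L E t - E t ∘L D + Db) (C₃ t (ω t))
  have hw : HasDerivAt (fun t => (D ∘L E t - E t ∘L D + Db) (C₃ t (ω t)))
      (D (E' ω₀) - E' (D ω₀) + Db ω') 0 := by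
    have := (hDEv.sub hEDv).add hDbv
    simpa [ContinuousLinearMap.add_apply, ContinuousLinearMap.sub_apply,
      ContinuousLinearMap.comp_apply, Pi.sub_def, Pi.add_def] using this
  -- x(t) = C₂ t (w t)
  have hx : HasDerivAt (fun t => C₂ t ((D ∘L E t - E t ∘L D + Db) (C₃ t (ω t))))
      (D (E' ω₀) - E' (D ω₀) + Db ω') 0 := by
    simpa [hE0, hC₃0, hω0, hC₂0] using hRC₂.clm_apply hw
  -- value of x at 0 is Db ω₀
  have hx0 : C₂ 0 ((D ∘L E 0 - E 0 ∘L D + Db) (C₃ 0 (ω 0))) = Db ω₀ := by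
    simp [hE0, hC₃0, hω0, hC₂0]
  -- pieces of y(t) = Db (Eb t (x t)) - Eb t (Db (x t)) + D (x t)
  have hEbx : HasDerivAt (fun t => Eb t (C₂ t ((D ∘L E t - E t ∘L D + Db) (C₃ t (ω t)))))
      (Eb' (Db ω₀)) 0 := by
    simpa only [ContinuousLinearMap.coe_restrictScalars', hx0, hEb0,
      ContinuousLinearMap.zero_apply, add_zero] using hREb.clm_apply hx
  have hDbEbx : HasDerivAt
      (fun t => Db (Eb t (C₂ t ((D ∘L E t - E t ∘L D + Db) (C₃ t (ω t))))))
      (Db (Eb' (Db ω₀))) 0 := by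
    simpa only [Function.comp_def, ContinuousLinearMap.coe_restrictScalars'] using
      (Db.restrictScalars ℝ).hasFDerivAt.comp_hasDerivAt 0 hEbx
  have hDbx : HasDerivAt (fun t => Db (C₂ t ((D ∘L E t - E t ∘L D + Db) (C₃ t (ω t)))))
      (Db (D (E' ω₀) - E' (D ω₀) + Db ω')) 0 := by
    simpa only [Function.comp_def, ContinuousLinearMap.coe_restrictScalars'] using
      (Db.restrictScalars ℝ).hasFDerivAt.comp_hasDerivAt 0 hx
  have hEbDbx : HasDerivAt
      (fun t => Eb t (Db (C₂ t ((D ∘L E t - E t ∘L D + Db) (C₃ t (ω t))))))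
      (Eb' (Db (Db ω₀))) 0 := by
    simpa only [ContinuousLinearMap.coe_restrictScalars', hx0, hEb0,
      ContinuousLinearMap.zero_apply, add_zero] using hREb.clm_apply hDbx
  have hDx : HasDerivAt (fun t => D (C₂ t ((D ∘L E t - E t ∘L D + Db) (C₃ t (ω t)))))
      (D (D (E' ω₀) - E' (D ω₀) + Db ω')) 0 := by
    simpa only [Function.comp_def, ContinuousLinearMap.coe_restrictScalars'] using
      (D.restrictScalars ℝ).hasFDerivAt.comp_hasDerivAt 0 hx
  -- y(t) = (Db ∘L Eb t - Eb t ∘L Db + D) (x t)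
  have hy : HasDerivAt
      (fun t => (Db ∘L Eb t - Eb t ∘L Db + D)
        (C₂ t ((D ∘L E t - E t ∘L D + Db) (C₃ t (ω t)))))
      (Db (Eb' (Db ω₀)) - Eb' (Db (Db ω₀)) + D (D (E' ω₀) - E' (D ω₀) + Db ω')) 0 := by
    have := (hDbEbx.sub hEbDbx).add hDx
    simpa [ContinuousLinearMap.add_apply, ContinuousLinearMap.sub_apply,
      ContinuousLinearMap.comp_apply, Pi.sub_def, Pi.add_def] using this
  -- y(0) : value needed for the outer clm_apply
  have hy0 : (Db ∘L Eb 0 - Eb 0 ∘L Db + D)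
      (C₂ 0 ((D ∘L E 0 - E 0 ∘L D + Db) (C₃ 0 (ω 0)))) = D (Db ω₀) := by
    rw [hx0, hEb0]; simp
  -- F(t) = C₁ t (y t)
  have hF : HasDerivAt
      (fun t => C₁ t ((Db ∘L Eb t - Eb t ∘L Db + D)
        (C₂ t ((D ∘L E t - E t ∘L D + Db) (C₃ t (ω t))))))
      (Db (Eb' (Db ω₀)) - Eb' (Db (Db ω₀)) + D (D (E' ω₀) - E' (D ω₀) + Db ω')) 0 := by
    simpa only [ContinuousLinearMap.coe_restrictScalars', hy0, hC₁0,
      ContinuousLinearMap.zero_apply, ContinuousLinearMap.one_apply, zero_add,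
      map_zero, hSKT] using hRC₁.clm_apply hy
  have hzero : (fun t => C₁ t ((Db ∘L Eb t - Eb t ∘L Db + D)
        (C₂ t ((D ∘L E t - E t ∘L D + Db) (C₃ t (ω t)))))) = fun _ => (0:V) :=
    funext hSKTfam
  rw [hzero] at hF
  have hd0 : Db (Eb' (Db ω₀)) - Eb' (Db (Db ω₀)) + D (D (E' ω₀) - E' (D ω₀) + Db ω') = 0 :=
    hF.unique (hasDerivAt_const 0 0)
  simp only [map_sub, map_add, map_zero, hD2, hDb2, sub_zero, zero_sub] at hd0
  linear_combination (norm := abel) hd0
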